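/- (Theorem 1, σ > 0 case.) Suppose 0 ≤ ν̄ < c and σ > 0, and set λ = 2c/σ² and ρ = ν̄/c. Let μ_λ be the exponential distribution with rate λ on [0,∞), let G be the probability measure on (0,∞) with density x ↦ ν((x,∞))/ν̄ (any fixed probability measure when ν̄ = 0), and define the probability measure W = μ_λ ∗ ( Σ_{n=0}^∞ (1 − ρ) ρⁿ (μ_λ ∗ G)^{∗n} ), i.e. the law of X₀ + Σ_{n=1}^N (X_n + Y_n) where N is geometric with P[N = n] = (1 − ρ)ρⁿ, the X_i are exponential(λ), the Y_i have law G, and all are independent. Then for every α > 0, ∫ e^{−αx} W(dx) = α(c − ν̄)/φ(α). -/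

import Mathlib

open MeasureTheory Set Real
open scoped ENNReal

/-- The `n`-fold convolution power of a measure on `ℝ`, with `H^{∗0} = δ₀`. -/
noncomputable def convPow (H : Measure ℝ) : ℕ → Measure ℝ
  | 0 => Measure.dirac 0
  | n + 1 => Measure.conv (convPow H n) H

/-- The exponential distribution with rate `l > 0`, having density `l e^{−lx}`
on `[0,∞)`. -/
noncomputable def expMeasure (l : ℝ) : Measure ℝ :=
  volume.withDensity
    (fun x => ENNReal.ofReal (if 0 ≤ x then l * Real.exp (-(l * x)) else 0))


noncomputable def Lap (μ : Measure ℝ) (α : ℝ) : ℝ≥0∞ :=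
  ∫⁻ x, ENNReal.ofReal (Real.exp (-(α * x))) ∂μ

lemma measLap (α : ℝ) : Measurable fun x : ℝ => ENNReal.ofReal (Real.exp (-(α * x))) := by
  fun_prop

lemma Lap_conv (μ ν : Measure ℝ) [SFinite ν] (α : ℝ) :
    Lap (Measure.conv μ ν) α = Lap μ α * Lap ν α := by
  unfold Lap Measure.conv
  rw [lintegral_map (measLap α) (by fun_prop)]
  rw [lintegral_prod (fun p : ℝ × ℝ => ENNReal.ofReal (Real.exp (-(α * (p.1 + p.2)))))
    (by fun_prop)]
  have h : ∀ x y : ℝ, ENNReal.ofReal (Real.exp (-(α * (x + y))))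
      = ENNReal.ofReal (Real.exp (-(α * x))) * ENNReal.ofReal (Real.exp (-(α * y))) := by
    intro x y
    rw [← ENNReal.ofReal_mul (exp_nonneg _)]
    congr 1
    rw [← Real.exp_add]
    ring_nf
  simp only [h]
  calc ∫⁻ x, ∫⁻ y, ENNReal.ofReal (Real.exp (-(α * x))) * ENNReal.ofReal (Real.exp (-(α * y))) ∂ν ∂μ
      = ∫⁻ x, ENNReal.ofReal (Real.exp (-(α * x))) * ∫⁻ y, ENNReal.ofReal (Real.exp (-(α * y))) ∂ν ∂μ := by
        congr 1; ext x; rw [lintegral_const_mul _ (measLap α)]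
    _ = _ := lintegral_mul_const'' _ (measLap α).aemeasurable

lemma Lap_dirac (α : ℝ) : Lap (Measure.dirac 0) α = 1 := by
  unfold Lap
  rw [lintegral_dirac' _ (measLap α)]
  simp

lemma Lap_convPow (H : Measure ℝ) [SFinite H] (α : ℝ) (n : ℕ) :
    Lap (convPow H n) α = (Lap H α) ^ n := by
  induction n with
  | zero => simpa [convPow] using Lap_dirac α
  | succ n ih => rw [convPow, Lap_conv _ _ α, ih, pow_succ]

lemma measExpDens (l : ℝ) :
    Measurable fun x : ℝ => ENNReal.ofReal (if 0 ≤ x then l * Real.exp (-(l * x)) else 0) := by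
  apply Measurable.ennreal_ofReal
  exact Measurable.ite measurableSet_Ici (by fun_prop) measurable_const

lemma integral_exp_rate {b : ℝ} (hb : 0 < b) :
    ∫ x in Ioi (0:ℝ), Real.exp (-(b * x)) = b⁻¹ := by
  have := integral_comp_mul_left_Ioi (fun u => Real.exp (-u)) 0 hb
  simp only [mul_zero] at this
  rw [this, integral_exp_neg_Ioi_zero, smul_eq_mul, mul_one]

lemma Lap_expMeasure {l α : ℝ} (hl : 0 < l) (hα : 0 ≤ α) :
    Lap (expMeasure l) α = ENNReal.ofReal (l / (l + α)) := by
  have hla : 0 < l + α := by linarith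
  unfold Lap expMeasure
  rw [lintegral_withDensity_eq_lintegral_mul _ (measExpDens l) (measLap α)]
  have h : (fun x => (ENNReal.ofReal (if 0 ≤ x then l * Real.exp (-(l * x)) else 0)
        * ENNReal.ofReal (Real.exp (-(α * x)))))
      = (Ici (0:ℝ)).indicator (fun x => ENNReal.ofReal (l * Real.exp (-((l + α) * x)))) := by
    ext x
    by_cases hx : 0 ≤ x
    · simp only [hx, if_true, indicator_of_mem (mem_Ici.mpr hx)]
      rw [← ENNReal.ofReal_mul (by positivity)]
      congr 1
      rw [mul_assoc, ← Real.exp_add]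
      ring_nf
    · simp [hx, indicator_of_notMem (fun h => hx (mem_Ici.mp h))]
  simp only [Pi.mul_apply] at h ⊢
  rw [h]
  show ∫⁻ x, (Ici (0:ℝ)).indicator _ x ∂volume = _
  rw [lintegral_indicator measurableSet_Ici,
    setLIntegral_congr (Ioi_ae_eq_Ici (a := (0:ℝ))).symm,
    ← ofReal_integral_eq_lintegral_ofReal]
  · rw [MeasureTheory.integral_const_mul, integral_exp_rate hla]
    rw [div_eq_mul_inv]
  · have h2 := (exp_neg_integrableOn_Ioi 0 hla).const_mul l
    rw [show (fun x : ℝ => l * Real.exp (-((l + α) * x)))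
        = fun x : ℝ => l * Real.exp (-(l + α) * x) by funext x; rw [neg_mul]]
    exact h2
  · filter_upwards with x using by positivity

lemma lintegral_Ioo_exp {α : ℝ} (hα : 0 < α) (y : ℝ) :
    ∫⁻ x in Ioo (0:ℝ) y, ENNReal.ofReal (Real.exp (-(α * x)))
      = ENNReal.ofReal (α⁻¹ * (1 - Real.exp (-(α * y)))) := by
  by_cases hy : 0 < y
  · rw [← ofReal_integral_eq_lintegral_ofReal]
    · congr 1
      rw [← integral_Ioc_eq_integral_Ioo, ← intervalIntegral.integral_of_le hy.le]
      have h1 : ∀ x : ℝ, Real.exp (-(α * x)) = Real.exp (-α * x) := by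
        intro x; rw [neg_mul]
      simp only [h1]
      rw [intervalIntegral.integral_comp_mul_left (fun u => Real.exp u) (by linarith : -α ≠ 0)]
      simp only [mul_zero, integral_exp, smul_eq_mul, Real.exp_zero]
      rw [inv_neg]
      ring
    · apply ((exp_neg_integrableOn_Ioi 0 hα).mono_set Ioo_subset_Ioi_self).congr
      filter_upwards with x using by rw [neg_mul]
    · filter_upwards with x using by positivity
  · rw [Ioo_eq_empty hy]
    simp only [Measure.restrict_empty, lintegral_zero_measure]
    rw [eq_comm, ENNReal.ofReal_eq_zero]
    have : (1:ℝ) ≤ Real.exp (-(α * y)) := by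
      rw [show (1:ℝ) = Real.exp 0 by simp]
      apply Real.exp_le_exp.mpr
      nlinarith [not_lt.mp hy]
    have hb : 0 ≤ α⁻¹ := by positivity
    nlinarith

lemma fubini_tail (ν : Measure ℝ) [SFinite ν] {α : ℝ} (hα : 0 < α) :
    ∫⁻ x in Ioi (0:ℝ), ν (Ioi x) * ENNReal.ofReal (Real.exp (-(α * x)))
      = ENNReal.ofReal α⁻¹ * ∫⁻ y, ENNReal.ofReal (1 - Real.exp (-(α * y))) ∂ν := by
  set f : ℝ → ℝ → ℝ≥0∞ := fun x y => (Ioi x).indicator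
      (fun _ => ENNReal.ofReal (Real.exp (-(α * x)))) y with hf
  have huncurry : Function.uncurry f = {p : ℝ × ℝ | p.1 < p.2}.indicator
      (fun p => ENNReal.ofReal (Real.exp (-(α * p.1)))) := by
    ext ⟨x, y⟩
    by_cases h : x < y <;>
      simp [hf, Function.uncurry, h, indicator, mem_Ioi]
  have hmeas : Measurable (Function.uncurry f) := by
    rw [huncurry]
    exact ((measLap α).comp measurable_fst).indicator
      (measurableSet_lt measurable_fst measurable_snd)
  have step1 : ∀ x : ℝ, ν (Ioi x) * ENNReal.ofReal (Real.exp (-(α * x)))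
      = ∫⁻ y, f x y ∂ν := by
    intro x
    rw [hf]
    simp only
    rw [lintegral_indicator_const measurableSet_Ioi, mul_comm]
  calc ∫⁻ x in Ioi (0:ℝ), ν (Ioi x) * ENNReal.ofReal (Real.exp (-(α * x)))
      = ∫⁻ x in Ioi (0:ℝ), ∫⁻ y, f x y ∂ν := by
        apply lintegral_congr; intro x; exact step1 x
    _ = ∫⁻ y, (∫⁻ x in Ioi (0:ℝ), f x y) ∂ν := by
        exact lintegral_lintegral_swap hmeas.aemeasurable
    _ = ∫⁻ y, (ENNReal.ofReal α⁻¹ * ENNReal.ofReal (1 - Real.exp (-(α * y)))) ∂ν := by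
        apply lintegral_congr
        intro y
        have : ∫⁻ x in Ioi (0:ℝ), f x y = ∫⁻ x in Ioo (0:ℝ) y, ENNReal.ofReal (Real.exp (-(α * x))) := by
          rw [hf]
          simp only
          have hswap : ∀ x : ℝ, (Ioi x).indicator
              (fun _ => ENNReal.ofReal (Real.exp (-(α * x)))) y
              = (Iio y).indicator (fun x => ENNReal.ofReal (Real.exp (-(α * x)))) x := by
            intro x
            by_cases h : x < y <;> simp [indicator, h, mem_Ioi, mem_Iio]
          simp only [hswap]
          rw [lintegral_indicator measurableSet_Iio, Measure.restrict_restrict measurableSet_Iio,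
            show Iio y ∩ Ioi (0:ℝ) = Ioo 0 y by rw [inter_comm, Ioi_inter_Iio]]
        rw [this, lintegral_Ioo_exp hα y, ENNReal.ofReal_mul (by positivity)]
    _ = ENNReal.ofReal α⁻¹ * ∫⁻ y, ENNReal.ofReal (1 - Real.exp (-(α * y))) ∂ν := by
        rw [lintegral_const_mul _ (by fun_prop)]

lemma sigmaFinite_of_moment (ν : Measure ℝ) (hν : ν (Iic 0) = 0)
    (hint : IntegrableOn (fun x => x) (Ioi 0) ν) : SigmaFinite ν := by
  have hfin : ∀ ε : ℝ, 0 < ε → ν (Ioi ε) < ⊤ := by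
    intro ε hε
    have h1 : ν (Ioi ε) = ν.restrict (Ioi 0) (Ioi ε) := by
      rw [Measure.restrict_apply measurableSet_Ioi,
        inter_eq_self_of_subset_left (Ioi_subset_Ioi hε.le)]
    have h2 : ENNReal.ofReal ε * ν.restrict (Ioi 0) {x | ENNReal.ofReal ε ≤ ENNReal.ofReal x}
        ≤ ∫⁻ x, ENNReal.ofReal x ∂(ν.restrict (Ioi 0)) :=
      mul_meas_ge_le_lintegral₀ (by fun_prop) _
    have h3 : ∫⁻ x, ENNReal.ofReal x ∂(ν.restrict (Ioi 0)) < ⊤ := by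
      refine lt_of_le_of_lt (lintegral_mono fun x => ?_) hint.2
      exact Real.ofReal_le_enorm x
    have h4 : ν.restrict (Ioi 0) (Ioi ε) ≤
        ν.restrict (Ioi 0) {x | ENNReal.ofReal ε ≤ ENNReal.ofReal x} :=
      measure_mono fun x hx => ENNReal.ofReal_le_ofReal (le_of_lt hx)
    have h5 : ENNReal.ofReal ε * ν (Ioi ε) < ⊤ := by
      rw [h1]
      exact lt_of_le_of_lt (mul_le_mul_right h4 _) (lt_of_le_of_lt h2 h3)
    have hε' : ENNReal.ofReal ε ≠ 0 := by
      simp [ENNReal.ofReal_eq_zero, not_le, hε]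
    by_contra h
    rw [not_lt, top_le_iff] at h
    rw [h, ENNReal.mul_top hε'] at h5
    exact (lt_irrefl _ h5)
  constructor
  refine ⟨⟨fun n => Iic 0 ∪ Ioi (1 / (n + 1) : ℝ), fun _ => trivial, fun n => ?_, ?_⟩⟩
  · refine lt_of_le_of_lt (measure_union_le _ _) ?_
    rw [hν, zero_add]
    exact hfin _ (by positivity)
  · ext x
    simp only [mem_iUnion, mem_union, mem_Iic, mem_Ioi, mem_univ, iff_true]
    rcases le_or_gt x 0 with h | h
    · exact ⟨0, Or.inl h⟩
    · obtain ⟨n, hn⟩ := exists_nat_one_div_lt h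
      exact ⟨n, Or.inr hn⟩

lemma one_sub_exp_le {t : ℝ} : 1 - Real.exp (-t) ≤ t := by
  nlinarith [Real.add_one_le_exp (-t)]

lemma one_sub_exp_nonneg {t : ℝ} (ht : 0 ≤ t) : 0 ≤ 1 - Real.exp (-t) := by
  have : Real.exp (-t) ≤ Real.exp 0 := Real.exp_le_exp.mpr (by linarith)
  simp only [Real.exp_zero] at this
  linarith

lemma integrable_one_sub_exp (ν : Measure ℝ) (hν : ν (Iic 0) = 0)
    (hint : IntegrableOn (fun x => x) (Ioi 0) ν) {α : ℝ} (hα : 0 < α) :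
    IntegrableOn (fun y => 1 - Real.exp (-(α * y))) (Ioi 0) ν := by
  refine Integrable.mono (hint.const_mul α) ?_ ?_
  · exact (Continuous.aestronglyMeasurable (by fun_prop))
  · filter_upwards [ae_restrict_mem measurableSet_Ioi] with y hy
    simp only [norm_eq_abs]
    have hy' : 0 < y := hy
    rw [abs_of_nonneg (one_sub_exp_nonneg (by positivity)), abs_of_nonneg (by positivity)]
    exact one_sub_exp_le

lemma restrict_Ioi_eq (ν : Measure ℝ) (hν : ν (Iic 0) = 0) : ν.restrict (Ioi 0) = ν := by
  apply Measure.restrict_eq_self_of_ae_mem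
  rw [ae_iff]
  convert hν using 2
  ext x
  simp [mem_Ioi, not_lt]

lemma lintegral_one_sub_exp (ν : Measure ℝ) (hν : ν (Iic 0) = 0)
    (hint : IntegrableOn (fun x => x) (Ioi 0) ν) {α : ℝ} (hα : 0 < α) :
    ∫⁻ y, ENNReal.ofReal (1 - Real.exp (-(α * y))) ∂ν
      = ENNReal.ofReal (∫ y in Ioi (0:ℝ), (1 - Real.exp (-(α * y))) ∂ν) := by
  conv_lhs => rw [← restrict_Ioi_eq ν hν]
  rw [← ofReal_integral_eq_lintegral_ofReal (integrable_one_sub_exp ν hν hint hα)]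
  filter_upwards [ae_restrict_mem measurableSet_Ioi] with y hy
  have hy' : 0 < y := hy
  exact one_sub_exp_nonneg (by positivity)

lemma Lap_G_eq (ν : Measure ℝ) [SFinite ν] (hν : ν (Iic 0) = 0)
    (hint : IntegrableOn (fun x => x) (Ioi 0) ν)
    {νbar : ℝ} (hpos : 0 < νbar) {α : ℝ} (hα : 0 < α) :
    Lap (volume.withDensity (fun x => if 0 < x then ν (Ioi x) / ENNReal.ofReal νbar else 0)) α
      = ENNReal.ofReal (α⁻¹ * νbar⁻¹ * ∫ y in Ioi (0:ℝ), (1 - Real.exp (-(α * y))) ∂ν) := by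
  have hmeasτ : Measurable fun x : ℝ => ν (Ioi x) := by
    have : Antitone fun x : ℝ => ν (Ioi x) := fun a b hab => measure_mono (Ioi_subset_Ioi hab)
    exact this.measurable
  have hmeasd : Measurable fun x : ℝ => if 0 < x then ν (Ioi x) / ENNReal.ofReal νbar else 0 :=
    Measurable.ite measurableSet_Ioi (hmeasτ.div measurable_const) measurable_const
  unfold Lap
  rw [lintegral_withDensity_eq_lintegral_mul _ hmeasd (measLap α)]
  have h : (fun x => ((fun x : ℝ => if 0 < x then ν (Ioi x) / ENNReal.ofReal νbar else 0) x
        * ENNReal.ofReal (Real.exp (-(α * x)))))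
      = (Ioi (0:ℝ)).indicator
        (fun x => (ENNReal.ofReal νbar)⁻¹ * (ν (Ioi x) * ENNReal.ofReal (Real.exp (-(α * x))))) := by
    ext x
    by_cases hx : 0 < x
    · simp only [hx, if_true, indicator_of_mem (mem_Ioi.mpr hx)]
      rw [ENNReal.div_eq_inv_mul]
      ring
    · simp [hx, indicator_of_notMem (fun h => hx (mem_Ioi.mp h))]
  simp only [Pi.mul_apply] at h ⊢
  rw [h]
  show ∫⁻ x, (Ioi (0:ℝ)).indicator _ x ∂volume = _
  rw [lintegral_indicator measurableSet_Ioi,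
    lintegral_const_mul _ (show Measurable (fun x => ν (Ioi x) * ENNReal.ofReal (Real.exp (-(α * x)))) from hmeasτ.mul (measLap α)),
    fubini_tail ν hα, lintegral_one_sub_exp ν hν hint hα,
    ← ENNReal.ofReal_inv_of_pos hpos]
  rw [← ENNReal.ofReal_mul (by positivity), ← ENNReal.ofReal_mul (by positivity)]
  congr 1
  ring

lemma Lap_le_one (μ : Measure ℝ) [IsProbabilityMeasure μ] (h0 : μ (Iic 0) = 0)
    {α : ℝ} (hα : 0 ≤ α) : Lap μ α ≤ 1 := by
  have hae : ∀ᵐ x ∂μ, 0 < x := by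
    rw [ae_iff]
    convert h0 using 2
    ext x
    simp [not_lt]
  calc Lap μ α ≤ ∫⁻ _, 1 ∂μ := by
        apply lintegral_mono_ae
        filter_upwards [hae] with x hx
        rw [show (1:ℝ≥0∞) = ENNReal.ofReal 1 by simp]
        apply ENNReal.ofReal_le_ofReal
        rw [show (1:ℝ) = Real.exp 0 by simp]
        apply Real.exp_le_exp.mpr
        nlinarith
    _ = 1 := by simp

lemma sfinite_convPow (H : Measure ℝ) [SFinite H] (n : ℕ) : SFinite (convPow H n) := by
  induction n with
  | zero => rw [convPow]; infer_instance
  | succ n ih => rw [convPow]; exact @MeasureTheory.Measure.sfinite_conv_of_sfinite _ _ _ _ _ ih _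

/-- **Theorem 1, `σ > 0` case.** Suppose `0 ≤ ν̄ < c` and `σ > 0`, and set
`λ = 2c/σ²`, `ρ = ν̄/c`. Let `μ_λ` be the exponential distribution with rate `λ`, `G` the
probability measure on `(0,∞)` with density `x ↦ ν((x,∞))/ν̄` (any fixed probability
measure on `(0,∞)` when `ν̄ = 0`), and
`W = μ_λ ∗ (Σ_{n=0}^∞ (1 − ρ) ρⁿ (μ_λ ∗ G)^{∗n})`, i.e. the law of
`X₀ + Σ_{n=1}^N (X_n + Y_n)` with `N` geometric`(1 − ρ)`, `Xᵢ ∼ exp(λ)`, `Yᵢ ∼ G`, all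
independent. Then for every `α > 0`, `∫ e^{−αx} W(dx) = α(c − ν̄)/φ(α)`. -/
theorem stmt9 (ν : Measure ℝ) (hν : ν (Iic 0) = 0)
    (hint : IntegrableOn (fun x => x) (Ioi 0) ν)
    (νbar : ℝ) (hνbar : νbar = ∫ x in Ioi (0:ℝ), x ∂ν)
    (c σ : ℝ) (hc : 0 < c) (hσ : 0 < σ)
    (h0 : 0 ≤ νbar) (h1 : νbar < c)
    (φ : ℝ → ℝ)
    (hφ : ∀ α : ℝ, φ α = c * α + σ ^ 2 / 2 * α ^ 2
        - ∫ x in Ioi (0:ℝ), (1 - Real.exp (-(α * x))) ∂ν)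
    (lam ρ : ℝ) (hlam : lam = 2 * c / σ ^ 2) (hρ : ρ = νbar / c)
    (G : Measure ℝ) (hG_prob : IsProbabilityMeasure G) (hG0 : G (Iic 0) = 0)
    (hG : 0 < νbar → G = volume.withDensity
        (fun x => if 0 < x then ν (Ioi x) / ENNReal.ofReal νbar else 0))
    (W : Measure ℝ)
    (hW : W = Measure.conv (expMeasure lam)
        (Measure.sum (fun n : ℕ =>
          (ENNReal.ofReal ((1 - ρ) * ρ ^ n)) •
            convPow (Measure.conv (expMeasure lam) G) n))) :
    ∀ α : ℝ, 0 < α →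
      ∫ x, Real.exp (-(α * x)) ∂W = α * (c - νbar) / φ α := by
  intro α hα
  haveI := sigmaFinite_of_moment ν hν hint
  set Iν := ∫ y in Ioi (0:ℝ), (1 - Real.exp (-(α * y))) ∂ν with hIν
  have hIν0 : 0 ≤ Iν := by
    apply setIntegral_nonneg measurableSet_Ioi
    intro y hy
    have hy' : 0 < y := hy
    exact one_sub_exp_nonneg (by positivity)
  have hlam0 : 0 < lam := by rw [hlam]; positivity
  have hlama : 0 < lam + α := by linarith
  set m := lam / (lam + α) with hm
  have hm0 : 0 ≤ m := by positivity
  have hm1 : m < 1 := by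
    rw [hm, div_lt_one hlama]; linarith
  have hmval : Lap (expMeasure lam) α = ENNReal.ofReal m := Lap_expMeasure hlam0 hα.le
  -- facts about G
  have hgle : Lap G α ≤ 1 := Lap_le_one G hG0 hα.le
  have hgne : Lap G α ≠ ⊤ := (lt_of_le_of_lt hgle ENNReal.one_lt_top).ne
  set g := (Lap G α).toReal with hgdef
  have hgval : Lap G α = ENNReal.ofReal g := (ENNReal.ofReal_toReal hgne).symm
  have hg0 : 0 ≤ g := ENNReal.toReal_nonneg
  have hg1 : g ≤ 1 := by
    calc g ≤ (1 : ℝ≥0∞).toReal := ENNReal.toReal_mono (by simp) hgle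
      _ = 1 := by simp
  -- key identity ν̄ α g = Iν
  have hkey : νbar * α * g = Iν := by
    rcases eq_or_lt_of_le h0 with h | h
    · -- νbar = 0 forces ν = 0
      have hν0 : ν = 0 := by
        have hae : (fun x : ℝ => x) =ᵐ[ν.restrict (Ioi 0)] 0 := by
          rw [← integral_eq_zero_iff_of_nonneg_ae ?_ hint]
          · rw [← hνbar]; exact h.symm
          · filter_upwards [ae_restrict_mem measurableSet_Ioi] with y hy
            exact le_of_lt hy
        rw [restrict_Ioi_eq ν hν] at hae
        have hae2 : ∀ᵐ x ∂ν, 0 < x := by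
          rw [ae_iff]
          convert hν using 2
          ext x
          simp [not_lt]
        have : ∀ᵐ _x ∂ν, False := by
          filter_upwards [hae, hae2] with x hx hx2
          rw [Pi.zero_apply] at hx
          exact absurd hx (ne_of_gt hx2)
        have huniv : ν univ = 0 := by
          simpa [ae_iff] using this
        exact Measure.measure_univ_eq_zero.mp huniv
      rw [← h, hIν, hν0]
      simp
    · -- νbar > 0
      have hGν := hG h
      have := Lap_G_eq ν hν hint h hα
      rw [← hGν] at this
      have hgeq : g = α⁻¹ * νbar⁻¹ * Iν := by
        rw [hgdef, this, ENNReal.toReal_ofReal (by positivity)]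
      rw [hgeq]
      field_simp
  -- rho facts
  have hρ0 : 0 ≤ ρ := by rw [hρ]; positivity
  have hρ1 : ρ < 1 := by rw [hρ, div_lt_one hc]; exact h1
  have hr0 : 0 ≤ ρ * (m * g) := by positivity
  have hmg1 : m * g ≤ 1 := mul_le_one₀ hm1.le hg0 hg1
  have hr1 : ρ * (m * g) < 1 := lt_of_le_of_lt (mul_le_of_le_one_right hρ0 hmg1) hρ1
  -- Laplace transform of W
  haveI := hG_prob
  haveI : SFinite (expMeasure lam) := by unfold expMeasure; infer_instance
  set H := Measure.conv (expMeasure lam) G with hH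
  haveI : SFinite H := by rw [hH]; infer_instance
  haveI : ∀ n : ℕ, SFinite (convPow H n) := sfinite_convPow H
  have hLapH : Lap H α = ENNReal.ofReal (m * g) := by
    rw [hH, Lap_conv _ _ α, hmval, hgval, ← ENNReal.ofReal_mul hm0]
  have hsum : Lap (Measure.sum (fun n : ℕ =>
        (ENNReal.ofReal ((1 - ρ) * ρ ^ n)) • convPow H n)) α
      = ENNReal.ofReal ((1 - ρ) * (1 - ρ * (m * g))⁻¹) := by
    unfold Lap
    rw [lintegral_sum_measure]
    have hterm : ∀ n : ℕ, ∫⁻ x, ENNReal.ofReal (Real.exp (-(α * x)))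
          ∂((ENNReal.ofReal ((1 - ρ) * ρ ^ n)) • convPow H n)
        = ENNReal.ofReal ((1 - ρ) * (ρ * (m * g)) ^ n) := by
      intro n
      rw [lintegral_smul_measure]
      have : (∫⁻ x, ENNReal.ofReal (Real.exp (-(α * x))) ∂(convPow H n)) = (Lap H α) ^ n :=
        Lap_convPow H α n
      rw [this, hLapH, ← ENNReal.ofReal_pow (mul_nonneg hm0 hg0),
        smul_eq_mul, ← ENNReal.ofReal_mul (mul_nonneg (by linarith : (0:ℝ) ≤ 1 - ρ) (pow_nonneg hρ0 n))]
      congr 1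
      rw [mul_pow]
      ring
    rw [tsum_congr hterm, ← ENNReal.ofReal_tsum_of_nonneg
      (fun n => mul_nonneg (by linarith) (pow_nonneg hr0 n))
      (((summable_geometric_of_lt_one hr0 hr1).mul_left _))]
    congr 1
    rw [tsum_mul_left, tsum_geometric_of_lt_one hr0 hr1]
  have hLapW : Lap W α = ENNReal.ofReal (m * ((1 - ρ) * (1 - ρ * (m * g))⁻¹)) := by
    rw [hW, Lap_conv _ _ α, hmval, hsum, ← ENNReal.ofReal_mul hm0]
  -- positivity of denominators
  have hden : 0 < 1 - ρ * (m * g) := by linarith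
  have hφval : φ α = c * α + σ ^ 2 / 2 * α ^ 2 - νbar * α * g := by
    rw [hφ α, hkey]
  have hφpos : 0 < φ α := by
    rw [hφval]
    nlinarith [mul_le_mul_of_nonneg_left hg1 (by positivity : (0:ℝ) ≤ νbar * α),
      mul_pos hα hα, sq_nonneg σ, mul_pos hc hα]
  -- convert Bochner integral
  rw [integral_eq_lintegral_of_nonneg_ae
    (Filter.Eventually.of_forall fun x => Real.exp_nonneg _)
    (Continuous.aestronglyMeasurable (by fun_prop))]
  have : (∫⁻ x, ENNReal.ofReal (Real.exp (-(α * x))) ∂W) = Lap W α := rfl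
  have hdenpos : 0 < 1 - ρ * (m * g) := by linarith
  rw [this, hLapW, ENNReal.toReal_ofReal (mul_nonneg hm0 (mul_nonneg (by linarith)
    (inv_nonneg.mpr (by linarith))))]
  -- final algebra
  rw [eq_div_iff (ne_of_gt hφpos)]
  have key : m * (1 - ρ) * φ α = α * (c - νbar) * (1 - ρ * (m * g)) := by
    have hσ2 : (σ:ℝ) ^ 2 ≠ 0 := by positivity
    have hca : (2 * c / σ ^ 2 + α) ≠ 0 := by rw [← hlam]; exact ne_of_gt hlama
    rw [hφval, hm, hρ, hlam]
    field_simp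
  calc m * ((1 - ρ) * (1 - ρ * (m * g))⁻¹) * φ α
      = (m * (1 - ρ) * φ α) * (1 - ρ * (m * g))⁻¹ := by ring
    _ = (α * (c - νbar) * (1 - ρ * (m * g))) * (1 - ρ * (m * g))⁻¹ := by rw [key]
    _ = α * (c - νbar) := by
        rw [mul_assoc, mul_inv_cancel₀ (ne_of_gt hdenpos), mul_one]
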